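/- Let μ^L_{(m,n)} = |r^{L,m}_n| and μ^l_{(m,n)} = max_{(m',n')} |T^{l,m,m'}_{n,n'}| · μ^{l+1}_{(m',n')} for l = L−1,…,0, and let ŵ = (m̂,n̂) be any neuron-level walk. Assume [M]×[N⁽ⁱ⁾] has at least two elements for the given layer i. Then the maximum of the absolute neuron-level walk relevance R̃ over the constrained subset A_i = { (m,n) : (m_j,n_j) = (m̂_j,n̂_j) for all j < i, (m_i,n_i) ≠ (m̂_i,n̂_i) } equals, for i ≥ 1, (∏_{j=0}^{i−2} |T^{j,m̂_j,m̂_{j+1}}_{n̂_j,n̂_{j+1}}|) · max_{(m,n) ≠ (m̂_i,n̂_i)} |T^{i−1,m̂_{i−1},m}_{n̂_{i−1},n}| · μ^i_{(m,n)}, and for i = 0 it equals max_{(m,n) ≠ (m̂_0,n̂_0)} μ^0_{(m,n)}. (In particular, the constrained maximization can be carried out by reusing the unconstrained messages μ^l.) -/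

import Mathlib

namespace Stmt4Aux

abbrev Walk (L M : ℕ) (N : Fin (L + 1) → ℕ) :=
  (Fin (L + 1) → Fin (M + 1)) × ((j : Fin (L + 1)) → Fin (N j + 1))

variable {L M : ℕ} {N : Fin (L + 1) → ℕ}
  (T : (l : Fin L) → Fin (M + 1) → Fin (M + 1) →
    Fin (N l.castSucc + 1) → Fin (N l.succ + 1) → ℝ)
  (r : Fin (M + 1) → Fin (N (Fin.last L) + 1) → ℝ)

def factor (w : Walk L M N) (j : Fin L) : ℝ :=
  |T j (w.1 j.castSucc) (w.1 j.succ) (w.2 j.castSucc) (w.2 j.succ)|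

def tail (l : Fin (L + 1)) (w : Walk L M N) : ℝ :=
  (∏ j ∈ Finset.univ.filter (fun j : Fin L => l ≤ j.castSucc), factor T w j) *
    |r (w.1 (Fin.last L)) (w.2 (Fin.last L))|

theorem tail_last (w : Walk L M N) :
    tail T r (Fin.last L) w = |r (w.1 (Fin.last L)) (w.2 (Fin.last L))| := by
  have : Finset.univ.filter (fun j : Fin L => Fin.last L ≤ j.castSucc) = ∅ := by
    ext j
    simp only [Finset.mem_filter, Finset.mem_univ, true_and, Finset.notMem_empty,
      iff_false]
    exact not_le.mpr (Fin.castSucc_lt_last j)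
  rw [tail, this]
  simp

theorem tail_castSucc (l : Fin L) (w : Walk L M N) :
    tail T r l.castSucc w = factor T w l * tail T r l.succ w := by
  have hset : Finset.univ.filter (fun j : Fin L => l.castSucc ≤ j.castSucc) =
      insert l (Finset.univ.filter (fun j : Fin L => l.succ ≤ j.castSucc)) := by
    ext j
    simp only [Finset.mem_filter, Finset.mem_univ, true_and, Finset.mem_insert,
      Fin.castSucc_le_castSucc_iff, Fin.succ_le_castSucc_iff]
    constructor
    · intro h
      rcases eq_or_lt_of_le h with h | h
      · exact Or.inl h.symm
      · exact Or.inr h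
    · rintro (rfl | h)
      · exact le_rfl
      · exact h.le
  have hnot : l ∉ Finset.univ.filter (fun j : Fin L => l.succ ≤ j.castSucc) := by
    simp [Fin.succ_le_castSucc_iff]
  rw [tail, hset, Finset.prod_insert hnot, tail, mul_assoc]

theorem tail_zero (w : Walk L M N) :
    tail T r 0 w = (∏ j, factor T w j) * |r (w.1 (Fin.last L)) (w.2 (Fin.last L))| := by
  have : Finset.univ.filter (fun j : Fin L => (0 : Fin (L + 1)) ≤ j.castSucc) =
      Finset.univ := by
    ext j; simp [Fin.zero_le]
  rw [tail, this]

theorem tail_congr (l : Fin (L + 1)) {w v : Walk L M N}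
    (h : ∀ j, l ≤ j → w.1 j = v.1 j ∧ w.2 j = v.2 j) :
    tail T r l w = tail T r l v := by
  have hr := h (Fin.last L) (Fin.le_last l)
  rw [tail, tail, hr.1, hr.2]
  congr 1
  refine Finset.prod_congr rfl fun j hj => ?_
  simp only [Finset.mem_filter, Finset.mem_univ, true_and] at hj
  have h1 := h j.castSucc hj
  have h2 := h j.succ (hj.trans (Fin.castSucc_le_succ j))
  rw [factor, factor, h1.1, h1.2, h2.1, h2.2]

theorem tail_split (l : Fin (L + 1)) (w : Walk L M N) :
    tail T r 0 w =
      (∏ j ∈ Finset.univ.filter (fun j : Fin L => j.castSucc < l), factor T w j) *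
        tail T r l w := by
  have hfilter : Finset.univ.filter (fun j : Fin L => ¬ j.castSucc < l) =
      Finset.univ.filter (fun j : Fin L => l ≤ j.castSucc) := by
    ext j; simp [not_lt]
  have := Finset.prod_filter_mul_prod_filter_not Finset.univ
    (fun j : Fin L => j.castSucc < l) (factor T w)
  rw [tail_zero, ← this, hfilter, tail, mul_assoc]

variable (μ : (j : Fin (L + 1)) → Fin (M + 1) → Fin (N j + 1) → ℝ)
  (hμL : ∀ m n, μ (Fin.last L) m n = |r m n|)
  (hμ : ∀ (l : Fin L) (m : Fin (M + 1)) (n : Fin (N l.castSucc + 1)),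
    μ l.castSucc m n =
      Finset.univ.sup' Finset.univ_nonempty
        (fun p : Fin (M + 1) × Fin (N l.succ + 1) =>
          |T l m p.1 n p.2| * μ l.succ p.1 p.2))

include hμL hμ in
theorem tail_le_mu (l : Fin (L + 1)) (w : Walk L M N) :
    tail T r l w ≤ μ l (w.1 l) (w.2 l) := by
  induction l using Fin.reverseInduction with
  | last => rw [tail_last, hμL]
  | cast l ih =>
    rw [tail_castSucc, hμ]
    refine le_trans (mul_le_mul_of_nonneg_left ih (abs_nonneg _)) ?_
    have h := Finset.le_sup' (fun p : Fin (M + 1) × Fin (N l.succ + 1) =>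
        |T l (w.1 l.castSucc) p.1 (w.2 l.castSucc) p.2| * μ l.succ p.1 p.2)
      (Finset.mem_univ (w.1 l.succ, w.2 l.succ))
    simpa only [factor] using h

include hμL hμ in
theorem exists_tail_eq_mu :
    ∀ (l : Fin (L + 1)) (m : Fin (M + 1)) (n : Fin (N l + 1)),
      ∃ w : Walk L M N, w.1 l = m ∧ w.2 l = n ∧ tail T r l w = μ l m n := by
  intro l
  induction l using Fin.reverseInduction with
  | last =>
    intro m n
    refine ⟨(fun _ => m, Function.update (fun j => 0) (Fin.last L) n), rfl, ?_, ?_⟩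
    · simp
    · rw [tail_last, hμL]; simp
  | cast l ih =>
    intro m n
    obtain ⟨p, -, hp⟩ := Finset.exists_mem_eq_sup' Finset.univ_nonempty
      (fun p : Fin (M + 1) × Fin (N l.succ + 1) => |T l m p.1 n p.2| * μ l.succ p.1 p.2)
    obtain ⟨w, h1, h2, h3⟩ := ih p.1 p.2
    have hne : l.castSucc ≠ l.succ := (Fin.castSucc_lt_succ : l.castSucc < l.succ).ne
    refine ⟨(Function.update w.1 l.castSucc m, Function.update w.2 l.castSucc n),
      Function.update_self _ _ _, Function.update_self _ _ _, ?_⟩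
    have htail : tail T r l.succ
        (Function.update w.1 l.castSucc m, Function.update w.2 l.castSucc n) =
        tail T r l.succ w := by
      refine tail_congr T r l.succ fun j hj => ?_
      have hjne : j ≠ l.castSucc := fun h => by
        rw [h] at hj; exact absurd hj (Fin.castSucc_lt_succ : l.castSucc < l.succ).not_ge
      exact ⟨Function.update_of_ne hjne _ _, Function.update_of_ne hjne _ _⟩
    rw [tail_castSucc, htail, hμ, hp]
    have hs : l.castSucc ≠ l.succ := hne
    rw [factor]
    simp only [Function.update_self, Function.update_of_ne hne.symm, h1, h2, h3]

theorem tail_zero' (w : Walk L M N) :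
    tail T r 0 w =
      (∏ l : Fin L, |T l (w.1 l.castSucc) (w.1 l.succ) (w.2 l.castSucc) (w.2 l.succ)|) *
        |r (w.1 (Fin.last L)) (w.2 (Fin.last L))| := by
  rw [tail_zero]; rfl

theorem tail_zero_split (i' : Fin L)
    (mh : Fin (L + 1) → Fin (M + 1)) (nh : (j : Fin (L + 1)) → Fin (N j + 1))
    (w : Walk L M N)
    (hpre : ∀ j : Fin (L + 1), j < i'.succ → w.1 j = mh j ∧ w.2 j = nh j) :
    tail T r 0 w =
      (∏ j ∈ Finset.univ.filter (fun j : Fin L => j < i'),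
          |T j (mh j.castSucc) (mh j.succ) (nh j.castSucc) (nh j.succ)|) *
        (|T i' (mh i'.castSucc) (w.1 i'.succ) (nh i'.castSucc) (w.2 i'.succ)| *
          tail T r i'.succ w) := by
  have hset : Finset.univ.filter (fun j : Fin L => j.castSucc < i'.succ) =
      insert i' (Finset.univ.filter (fun j : Fin L => j < i')) := by
    ext j
    simp only [Finset.mem_filter, Finset.mem_univ, true_and, Finset.mem_insert,
      Fin.castSucc_lt_succ_iff]
    constructor
    · intro h
      rcases eq_or_lt_of_le h with h | h
      · exact Or.inl h
      · exact Or.inr h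
    · rintro (rfl | h)
      exacts [le_rfl, h.le]
  have hnot : i' ∉ Finset.univ.filter (fun j : Fin L => j < i') := by simp
  rw [tail_split T r i'.succ w, hset, Finset.prod_insert hnot]
  have hfac : factor T w i' =
      |T i' (mh i'.castSucc) (w.1 i'.succ) (nh i'.castSucc) (w.2 i'.succ)| := by
    have h1 := hpre i'.castSucc (Fin.castSucc_lt_succ : i'.castSucc < i'.succ)
    rw [factor, h1.1, h1.2]
  have hprod : ∀ j ∈ Finset.univ.filter (fun j : Fin L => j < i'),
      factor T w j =
        |T j (mh j.castSucc) (mh j.succ) (nh j.castSucc) (nh j.succ)| := by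
    intro j hj
    simp only [Finset.mem_filter, Finset.mem_univ, true_and] at hj
    have h1 := hpre j.castSucc (Fin.castSucc_lt_succ_iff.mpr hj.le)
    have h2 := hpre j.succ (Fin.succ_lt_succ_iff.mpr hj)
    rw [factor, h1.1, h1.2, h2.1, h2.2]
  rw [Finset.prod_congr rfl hprod, hfac]
  ring

end Stmt4Aux

open Stmt4Aux


/-- Constrained maximization over the split subset `A_i` reuses the
unconstrained max-product messages `μ`.  For a walk `(m̂,n̂)` and a layer `i`
(with at least two node–neuron pairs at layer `i`), the maximum of the absolute
neuron-level walk relevance over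
`A_i = { (m,n) : (m_j,n_j) = (m̂_j,n̂_j) ∀ j < i, (m_i,n_i) ≠ (m̂_i,n̂_i) }`
equals, for `i = 0`, `max_{(m,n) ≠ (m̂_0,n̂_0)} μ^0_{(m,n)}`, and for
`i = i'+1 ≥ 1`,
`(∏_{j=0}^{i-2} |T^{j,m̂_j,m̂_{j+1}}_{n̂_j,n̂_{j+1}}|) ·
 max_{(m,n) ≠ (m̂_i,n̂_i)} |T^{i-1,m̂_{i-1},m}_{n̂_{i-1},n}| μ^i_{(m,n)}`.
The inner maxima are expressed via `sSup` (supremum of a nonempty finite set of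
reals), and "the maximum over `A_i` equals …" via `IsGreatest`. -/
theorem stmt_4 (L M : ℕ) (hL : 1 ≤ L) (N : Fin (L + 1) → ℕ)
    (T : (l : Fin L) → Fin (M + 1) → Fin (M + 1) →
      Fin (N l.castSucc + 1) → Fin (N l.succ + 1) → ℝ)
    (r : Fin (M + 1) → Fin (N (Fin.last L) + 1) → ℝ)
    (μ : (j : Fin (L + 1)) → Fin (M + 1) → Fin (N j + 1) → ℝ)
    (hμL : ∀ m n, μ (Fin.last L) m n = |r m n|)
    (hμ : ∀ (l : Fin L) (m : Fin (M + 1)) (n : Fin (N l.castSucc + 1)),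
      μ l.castSucc m n =
        Finset.univ.sup' Finset.univ_nonempty
          (fun p : Fin (M + 1) × Fin (N l.succ + 1) =>
            |T l m p.1 n p.2| * μ l.succ p.1 p.2))
    (mh : Fin (L + 1) → Fin (M + 1)) (nh : (j : Fin (L + 1)) → Fin (N j + 1))
    (i : Fin (L + 1))
    (hcard : 1 < Fintype.card (Fin (M + 1) × Fin (N i + 1))) :
    (i = 0 →
      IsGreatest
        ((fun w : (Fin (L + 1) → Fin (M + 1)) × ((j : Fin (L + 1)) → Fin (N j + 1)) =>
            (∏ l : Fin L,
              |T l (w.1 l.castSucc) (w.1 l.succ) (w.2 l.castSucc) (w.2 l.succ)|) *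
              |r (w.1 (Fin.last L)) (w.2 (Fin.last L))|) ''
          { w | (∀ j, j < i → (w.1 j, w.2 j) = (mh j, nh j)) ∧
              (w.1 i, w.2 i) ≠ (mh i, nh i) })
        (sSup { x : ℝ | ∃ p : Fin (M + 1) × Fin (N 0 + 1),
            p ≠ (mh 0, nh 0) ∧ x = μ 0 p.1 p.2 })) ∧
    (∀ i' : Fin L, i = i'.succ →
      IsGreatest
        ((fun w : (Fin (L + 1) → Fin (M + 1)) × ((j : Fin (L + 1)) → Fin (N j + 1)) =>
            (∏ l : Fin L,
              |T l (w.1 l.castSucc) (w.1 l.succ) (w.2 l.castSucc) (w.2 l.succ)|) *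
              |r (w.1 (Fin.last L)) (w.2 (Fin.last L))|) ''
          { w | (∀ j, j < i → (w.1 j, w.2 j) = (mh j, nh j)) ∧
              (w.1 i, w.2 i) ≠ (mh i, nh i) })
        ((∏ j ∈ Finset.filter (fun j : Fin L => j < i') Finset.univ,
            |T j (mh j.castSucc) (mh j.succ) (nh j.castSucc) (nh j.succ)|) *
          sSup { x : ℝ | ∃ p : Fin (M + 1) × Fin (N i'.succ + 1),
            p ≠ (mh i'.succ, nh i'.succ) ∧
              x = |T i' (mh i'.castSucc) p.1 (nh i'.castSucc) p.2| *
                μ i'.succ p.1 p.2 })) := by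
  constructor
  · -- case i = 0
    intro hi
    subst hi
    have hF : (Finset.univ.erase ((mh 0, nh 0) : Fin (M + 1) × Fin (N 0 + 1))).Nonempty := by
      obtain ⟨q, hq⟩ := Fintype.exists_ne_of_one_lt_card hcard (mh 0, nh 0)
      exact ⟨q, Finset.mem_erase.mpr ⟨hq, Finset.mem_univ q⟩⟩
    have hSet : { x : ℝ | ∃ p : Fin (M + 1) × Fin (N 0 + 1),
          p ≠ (mh 0, nh 0) ∧ x = μ 0 p.1 p.2 } =
        (fun p : Fin (M + 1) × Fin (N 0 + 1) => μ 0 p.1 p.2) ''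
          ↑(Finset.univ.erase ((mh 0, nh 0) : Fin (M + 1) × Fin (N 0 + 1))) := by
      ext x
      simp only [Set.mem_setOf_eq, Set.mem_image, Finset.coe_erase, Finset.coe_univ,
        Set.mem_diff, Set.mem_univ, true_and, Set.mem_singleton_iff]
      constructor
      · rintro ⟨p, hp, rfl⟩; exact ⟨p, hp, rfl⟩
      · rintro ⟨p, hp, rfl⟩; exact ⟨p, hp, rfl⟩
    constructor
    · -- membership
      obtain ⟨p, hpF, hps⟩ := Finset.exists_mem_eq_sup' hF
        (fun p : Fin (M + 1) × Fin (N 0 + 1) => μ 0 p.1 p.2)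
      obtain ⟨w, h1, h2, h3⟩ := exists_tail_eq_mu T r μ hμL hμ 0 p.1 p.2
      refine ⟨w, ⟨fun j hj => absurd hj (by simp), ?_⟩, ?_⟩
      · rw [h1, h2]
        exact (Finset.mem_erase.mp hpF).1
      · beta_reduce
        rw [hSet, ← Finset.sup'_eq_csSup_image _ hF, hps, ← tail_zero' T r w]
        exact h3
    · -- upper bound
      rintro x ⟨w, ⟨-, hne⟩, rfl⟩
      rw [hSet, ← Finset.sup'_eq_csSup_image _ hF]
      dsimp only
      rw [← tail_zero' T r w]
      calc tail T r 0 w ≤ μ 0 (w.1 0) (w.2 0) := tail_le_mu T r μ hμL hμ 0 w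
        _ ≤ _ := Finset.le_sup' (fun p : Fin (M + 1) × Fin (N 0 + 1) => μ 0 p.1 p.2)
            (Finset.mem_erase.mpr ⟨hne, Finset.mem_univ _⟩)
  · -- case i = i'.succ
    intro i' hi
    subst hi
    set g : Fin (M + 1) × Fin (N i'.succ + 1) → ℝ := fun p =>
      |T i' (mh i'.castSucc) p.1 (nh i'.castSucc) p.2| * μ i'.succ p.1 p.2 with hg
    have hF : (Finset.univ.erase
        ((mh i'.succ, nh i'.succ) : Fin (M + 1) × Fin (N i'.succ + 1))).Nonempty := by
      obtain ⟨q, hq⟩ := Fintype.exists_ne_of_one_lt_card hcard (mh i'.succ, nh i'.succ)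
      exact ⟨q, Finset.mem_erase.mpr ⟨hq, Finset.mem_univ q⟩⟩
    have hSet : { x : ℝ | ∃ p : Fin (M + 1) × Fin (N i'.succ + 1),
          p ≠ (mh i'.succ, nh i'.succ) ∧
            x = |T i' (mh i'.castSucc) p.1 (nh i'.castSucc) p.2| * μ i'.succ p.1 p.2 } =
        g '' ↑(Finset.univ.erase
          ((mh i'.succ, nh i'.succ) : Fin (M + 1) × Fin (N i'.succ + 1))) := by
      ext x
      simp only [Set.mem_setOf_eq, Set.mem_image, Finset.coe_erase, Finset.coe_univ,
        Set.mem_diff, Set.mem_univ, true_and, Set.mem_singleton_iff, hg]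
      constructor
      · rintro ⟨p, hp, rfl⟩; exact ⟨p, hp, rfl⟩
      · rintro ⟨p, hp, rfl⟩; exact ⟨p, hp, rfl⟩
    have hc : (0 : ℝ) ≤ ∏ j ∈ Finset.filter (fun j : Fin L => j < i') Finset.univ,
        |T j (mh j.castSucc) (mh j.succ) (nh j.castSucc) (nh j.succ)| :=
      Finset.prod_nonneg fun _ _ => abs_nonneg _
    constructor
    · -- membership
      obtain ⟨p, hpF, hps⟩ := Finset.exists_mem_eq_sup' hF g
      obtain ⟨w, h1, h2, h3⟩ := exists_tail_eq_mu T r μ hμL hμ i'.succ p.1 p.2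
      set w' : Walk L M N :=
        (fun j => if j < i'.succ then mh j else w.1 j,
         fun j => if j < i'.succ then nh j else w.2 j) with hw'
      have hpre : ∀ j : Fin (L + 1), j < i'.succ → w'.1 j = mh j ∧ w'.2 j = nh j :=
        fun j hj => ⟨if_pos hj, if_pos hj⟩
      have h1' : w'.1 i'.succ = p.1 := by
        show (if i'.succ < i'.succ then mh i'.succ else w.1 i'.succ) = p.1
        rw [if_neg (lt_irrefl _)]; exact h1
      have h2' : w'.2 i'.succ = p.2 := by
        show (if i'.succ < i'.succ then nh i'.succ else w.2 i'.succ) = p.2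
        rw [if_neg (lt_irrefl _)]; exact h2
      have htail : tail T r i'.succ w' = tail T r i'.succ w := by
        refine tail_congr T r i'.succ fun j hj => ?_
        have : ¬ j < i'.succ := not_lt.mpr hj
        exact ⟨if_neg this, if_neg this⟩
      refine ⟨w', ⟨fun j hj => by rw [(hpre j hj).1, (hpre j hj).2], ?_⟩, ?_⟩
      · rw [h1', h2']
        exact (Finset.mem_erase.mp hpF).1
      · beta_reduce
        rw [hSet, ← Finset.sup'_eq_csSup_image _ hF, hps]
        rw [← tail_zero' T r w', tail_zero_split T r i' mh nh w' hpre, htail, h1', h2', h3]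
    · -- upper bound
      rintro x ⟨w, ⟨hpre, hne⟩, rfl⟩
      rw [hSet, ← Finset.sup'_eq_csSup_image _ hF]
      dsimp only
      have hpre' : ∀ j : Fin (L + 1), j < i'.succ → w.1 j = mh j ∧ w.2 j = nh j :=
        fun j hj => ⟨(Prod.ext_iff.mp (hpre j hj)).1, (Prod.ext_iff.mp (hpre j hj)).2⟩
      rw [← tail_zero' T r w, tail_zero_split T r i' mh nh w hpre']
      refine mul_le_mul_of_nonneg_left ?_ hc
      calc |T i' (mh i'.castSucc) (w.1 i'.succ) (nh i'.castSucc) (w.2 i'.succ)| *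
            tail T r i'.succ w
          ≤ |T i' (mh i'.castSucc) (w.1 i'.succ) (nh i'.castSucc) (w.2 i'.succ)| *
            μ i'.succ (w.1 i'.succ) (w.2 i'.succ) :=
            mul_le_mul_of_nonneg_left (tail_le_mu T r μ hμL hμ i'.succ w) (abs_nonneg _)
        _ ≤ _ := Finset.le_sup' g (Finset.mem_erase.mpr ⟨hne, Finset.mem_univ _⟩)
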